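/- Assume a > 0 and |b| > a + 1, and let Ω be a nonempty bounded open subset of ℝ² whose topological frontier equals C. If the John map T is periodic on C (there exists an integer N ≥ 1 with T^N(p) = p for all p ∈ C), then the real vector space of solutions of the homogeneous Dirichlet problem for the string equation on Ω is infinite-dimensional; i.e., there exists an infinite linearly independent family of such solutions. -/

import Mathlib

/-- The Euler–Baxter curve. -/
def EBcurve (a b : ℝ) : Set (ℝ × ℝ) :=
  {p : ℝ × ℝ | p.1 ^ 2 * p.2 ^ 2 + 1 + a * (p.1 ^ 2 + p.2 ^ 2) + 2 * b * p.1 * p.2 = 0}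

/-- The John map `T = I₂ ∘ I₁` built from the two John involutions. -/
noncomputable def johnMap (a b : ℝ) : ℝ × ℝ → ℝ × ℝ :=
  (fun q : ℝ × ℝ => (-2 * b * q.2 / (q.2 ^ 2 + a) - q.1, q.2)) ∘
    (fun q : ℝ × ℝ => (q.1, -2 * b * q.1 / (q.1 ^ 2 + a) - q.2))

/-- A solution of the homogeneous Dirichlet problem for the string equation on `Ω`:
continuous on the closure of `Ω`, twice continuously differentiable on `Ω`,
satisfying `∂²Φ/∂x∂y = 0` on `Ω`, and vanishing on the curve `C`. -/
def IsDirichletSolution (a b : ℝ) (Ω : Set (ℝ × ℝ)) (Φ : ℝ × ℝ → ℝ) : Prop :=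
  ContinuousOn Φ (closure Ω) ∧ ContDiffOn ℝ 2 Φ Ω ∧
    (∀ p ∈ Ω, deriv (fun x : ℝ => deriv (fun y : ℝ => Φ (x, y)) p.2) p.1 = 0) ∧
    ∀ p ∈ EBcurve a b, Φ p = 0

noncomputable section EBaux
open Set Metric Finset Polynomial

/-- first John involution -/
def J1 (a b : ℝ) (p : ℝ × ℝ) : ℝ × ℝ := (p.1, -2 * b * p.1 / (p.1 ^ 2 + a) - p.2)
/-- second John involution -/
def J2 (a b : ℝ) (p : ℝ × ℝ) : ℝ × ℝ := (-2 * b * p.2 / (p.2 ^ 2 + a) - p.1, p.2)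
/-- defining polynomial of the curve -/
def Fc (a b : ℝ) (p : ℝ × ℝ) : ℝ :=
  p.1 ^ 2 * p.2 ^ 2 + 1 + a * (p.1 ^ 2 + p.2 ^ 2) + 2 * b * p.1 * p.2
/-- discriminant quartic -/
def Dq (a b x : ℝ) : ℝ := b ^ 2 * x ^ 2 - (x ^ 2 + a) * (1 + a * x ^ 2)
/-- upper branch -/
def Yp (a b x : ℝ) : ℝ := (-b * x + Real.sqrt (Dq a b x)) / (x ^ 2 + a)
/-- lower branch -/
def Ym (a b x : ℝ) : ℝ := (-b * x - Real.sqrt (Dq a b x)) / (x ^ 2 + a)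
/-- averaged function -/
def Wf (a b : ℝ) (N : ℕ) (w : ℝ × ℝ → ℝ) (p : ℝ × ℝ) : ℝ :=
  ∑ k ∈ Finset.range N, (w ((johnMap a b)^[k] p) + w ((johnMap a b)^[k] (J1 a b p)))
/-- data function f -/
def fB (a b : ℝ) (N : ℕ) (w : ℝ × ℝ → ℝ) (x : ℝ) : ℝ :=
  if 0 ≤ Dq a b x then Wf a b N w (x, Yp a b x) else 0
/-- data function h -/
def hB (a b : ℝ) (N : ℕ) (w : ℝ × ℝ → ℝ) (y : ℝ) : ℝ :=
  if 0 ≤ Dq a b y then Wf a b N w (Yp a b y, y) else 0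
/-- fold points of the curve -/
def folds (a b : ℝ) : Set (ℝ × ℝ) :=
  {q | Fc a b q = 0 ∧ J1 a b q = q} ∪ {q | Fc a b q = 0 ∧ J2 a b q = q}

variable {a b : ℝ} {N : ℕ} {w : ℝ × ℝ → ℝ}

lemma sq_add_ne (ha : 0 < a) (x : ℝ) : x ^ 2 + a ≠ 0 := by positivity

lemma mem_EB_iff (p : ℝ × ℝ) : p ∈ EBcurve a b ↔ Fc a b p = 0 := Iff.rfl

lemma johnMap_def (p : ℝ × ℝ) : johnMap a b p = J2 a b (J1 a b p) := rfl

lemma J1_invol (p : ℝ × ℝ) : J1 a b (J1 a b p) = p := by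
  simp only [J1]; exact Prod.ext rfl (by ring)

lemma J2_invol (p : ℝ × ℝ) : J2 a b (J2 a b p) = p := by
  simp only [J2]; exact Prod.ext (by ring) rfl

lemma Fc_J1 (ha : 0 < a) (p : ℝ × ℝ) : Fc a b (J1 a b p) = Fc a b p := by
  have h := sq_add_ne ha p.1; simp only [Fc, J1]; field_simp; ring

lemma Fc_J2 (ha : 0 < a) (p : ℝ × ℝ) : Fc a b (J2 a b p) = Fc a b p := by
  have h := sq_add_ne ha p.2; simp only [Fc, J2]; field_simp; ring

lemma Fc_T (ha : 0 < a) (p : ℝ × ℝ) : Fc a b (johnMap a b p) = Fc a b p := by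
  rw [johnMap_def, Fc_J2 ha, Fc_J1 ha]

lemma Fc_T_iter (ha : 0 < a) (k : ℕ) (p : ℝ × ℝ) :
    Fc a b ((johnMap a b)^[k] p) = Fc a b p := by
  induction k with
  | zero => rfl
  | succ n ih => rw [Function.iterate_succ_apply', Fc_T ha, ih]

lemma T_J1 (p : ℝ × ℝ) : johnMap a b (J1 a b p) = J2 a b p := by
  rw [johnMap_def, J1_invol]

lemma T_J1_T (p : ℝ × ℝ) : johnMap a b (J1 a b (johnMap a b p)) = J1 a b p := by
  rw [T_J1, johnMap_def, J2_invol]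

lemma T_inj : Function.Injective (johnMap a b) := by
  have h : Function.LeftInverse (fun p => J1 a b (J2 a b p)) (johnMap a b) := by
    intro p; show J1 a b (J2 a b (J2 a b (J1 a b p))) = p; rw [J2_invol, J1_invol]
  exact h.injective

lemma key_identity (a b x y : ℝ) :
    ((x ^ 2 + a) * y + b * x) ^ 2 = (x ^ 2 + a) * Fc a b (x, y) + Dq a b x := by
  simp only [Fc, Dq]; ring

lemma Fc_swap (a b x y : ℝ) : Fc a b (x, y) = Fc a b (y, x) := by
  simp only [Fc]; ring

lemma Dq_nonneg (ha : 0 < a) {x y : ℝ} (h : Fc a b (x, y) = 0) : 0 ≤ Dq a b x := by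
  have hk := key_identity a b x y
  rw [h, mul_zero, zero_add] at hk
  rw [← hk]; positivity

lemma branch_sum (ha : 0 < a) {x : ℝ} :
    (x ^ 2 + a) * Yp a b x + b * x = Real.sqrt (Dq a b x) := by
  have := sq_add_ne ha x
  simp only [Yp]; field_simp; ring

lemma y_eq_branch (ha : 0 < a) {x y : ℝ} (h : Fc a b (x, y) = 0) :
    y = Yp a b x ∨ y = Ym a b x := by
  have hkey := key_identity a b x y
  rw [h, mul_zero, zero_add] at hkey
  have habs : |(x ^ 2 + a) * y + b * x| = Real.sqrt (Dq a b x) := by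
    rw [← hkey, Real.sqrt_sq_eq_abs]
  have hne := sq_add_ne ha x
  rcases (abs_eq (Real.sqrt_nonneg _)).mp habs with h1 | h1
  · left; simp only [Yp]; field_simp; linarith
  · right; simp only [Ym]; field_simp; linarith

lemma Fc_Yp (ha : 0 < a) {x : ℝ} (h : 0 ≤ Dq a b x) : Fc a b (x, Yp a b x) = 0 := by
  have hne := sq_add_ne ha x
  have h1 := key_identity a b x (Yp a b x)
  rw [branch_sum ha, Real.sq_sqrt h] at h1
  have : (x ^ 2 + a) * Fc a b (x, Yp a b x) = 0 := by linarith
  exact (mul_eq_zero.mp this).resolve_left hne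

lemma J1_Yp (ha : 0 < a) (x : ℝ) : J1 a b (x, Yp a b x) = (x, Ym a b x) := by
  have hne := sq_add_ne ha x
  simp only [J1, Yp, Ym]
  refine Prod.ext rfl ?_
  show -2 * b * x / (x ^ 2 + a) - (-b * x + Real.sqrt (Dq a b x)) / (x ^ 2 + a) = _
  field_simp; ring

lemma J1_Ym (ha : 0 < a) (x : ℝ) : J1 a b (x, Ym a b x) = (x, Yp a b x) := by
  have h := J1_Yp (a := a) (b := b) ha x
  have h2 : J1 a b (J1 a b (x, Yp a b x)) = (x, Yp a b x) := J1_invol _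
  rw [h] at h2; exact h2

lemma J2_Yp (ha : 0 < a) (y : ℝ) : J2 a b (Yp a b y, y) = (Ym a b y, y) := by
  have hne := sq_add_ne ha y
  simp only [J2, Yp, Ym]
  refine Prod.ext ?_ rfl
  show -2 * b * y / (y ^ 2 + a) - (-b * y + Real.sqrt (Dq a b y)) / (y ^ 2 + a) = _
  field_simp; ring

lemma Ym_eq_Yp_of_D0 {x : ℝ} (h : Dq a b x = 0) : Ym a b x = Yp a b x := by
  simp only [Ym, Yp, h, Real.sqrt_zero]; ring_nf

lemma Wf_J1 (p : ℝ × ℝ) : Wf a b N w (J1 a b p) = Wf a b N w p := by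
  simp only [Wf, J1_invol]
  exact Finset.sum_congr rfl (fun k _ => add_comm _ _)

lemma orbit_shift {z : ℝ × ℝ} (hz : (johnMap a b)^[N] z = z) :
    ∑ k ∈ Finset.range N, w ((johnMap a b)^[k] (johnMap a b z))
      = ∑ k ∈ Finset.range N, w ((johnMap a b)^[k] z) := by
  have h1 : ∀ k : ℕ, (johnMap a b)^[k] (johnMap a b z) = (johnMap a b)^[k + 1] z := by
    intro k; rw [Function.iterate_succ_apply]
  calc ∑ k ∈ Finset.range N, w ((johnMap a b)^[k] (johnMap a b z))
      = ∑ k ∈ Finset.range N, w ((johnMap a b)^[k + 1] z) := by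
        exact Finset.sum_congr rfl (fun k _ => by rw [h1])
    _ = ∑ k ∈ Finset.range (N + 1), w ((johnMap a b)^[k] z) - w ((johnMap a b)^[0] z) := by
        rw [Finset.sum_range_succ' (fun k => w ((johnMap a b)^[k] z)) N]; ring
    _ = ∑ k ∈ Finset.range N, w ((johnMap a b)^[k] z) := by
        rw [Finset.sum_range_succ, hz]; simp

lemma orbit_shift_iter {z : ℝ × ℝ} (hz : (johnMap a b)^[N] z = z) (j : ℕ) :
    ∑ k ∈ Finset.range N, w ((johnMap a b)^[k] ((johnMap a b)^[j] z))
      = ∑ k ∈ Finset.range N, w ((johnMap a b)^[k] z) := by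
  induction j with
  | zero => rfl
  | succ n ih =>
      have hz' : (johnMap a b)^[N] ((johnMap a b)^[n] z) = (johnMap a b)^[n] z := by
        rw [← Function.Commute.iterate_iterate_self, hz]
      rw [Function.iterate_succ_apply']
      rw [orbit_shift (a := a) (b := b) (w := w) hz', ih]

/-- T-invariance of W on the curve -/
lemma Wf_T (ha : 0 < a) (hN : 1 ≤ N)
    (hper : ∀ p ∈ EBcurve a b, (johnMap a b)^[N] p = p)
    {q : ℝ × ℝ} (hq : q ∈ EBcurve a b) :
    Wf a b N w (johnMap a b q) = Wf a b N w q := by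
  have hq' : Fc a b q = 0 := hq
  have hJq : J1 a b q ∈ EBcurve a b := by
    show Fc a b (J1 a b q) = 0; rw [Fc_J1 ha]; exact hq'
  have hkey : J1 a b (johnMap a b q) = (johnMap a b)^[N - 1] (J1 a b q) := by
    apply T_inj
    rw [T_J1_T]
    have h8 : johnMap a b ((johnMap a b)^[N - 1] (J1 a b q)) = (johnMap a b)^[N] (J1 a b q) := by
      have h9 : N = (N - 1) + 1 := by omega
      conv_rhs => rw [h9]
      rw [Function.iterate_succ_apply']
    rw [h8, hper _ hJq]
  simp only [Wf, Finset.sum_add_distrib]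
  congr 1
  · exact orbit_shift (hper q hq)
  · rw [hkey]
    exact orbit_shift_iter (hper _ hJq) (N - 1)

lemma Wf_J2 (ha : 0 < a) (hN : 1 ≤ N)
    (hper : ∀ p ∈ EBcurve a b, (johnMap a b)^[N] p = p)
    {q : ℝ × ℝ} (hq : q ∈ EBcurve a b) :
    Wf a b N w (J2 a b q) = Wf a b N w q := by
  have hJq : J1 a b q ∈ EBcurve a b := by
    show Fc a b (J1 a b q) = 0; rw [Fc_J1 ha]; exact hq
  have h1 : J2 a b q = johnMap a b (J1 a b q) := (T_J1 q).symm
  rw [h1, Wf_T ha hN hper hJq, Wf_J1]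

-- smoothness of the basic maps
lemma contDiff_J1 (ha : 0 < a) : ContDiff ℝ 2 (J1 a b) := by
  apply ContDiff.prodMk
  · exact contDiff_fst
  · apply ContDiff.sub
    · apply ContDiff.div
      · exact contDiff_const.mul contDiff_fst
      · exact (contDiff_fst.pow 2).add contDiff_const
      · intro p; exact sq_add_ne ha p.1
    · exact contDiff_snd

lemma contDiff_J2 (ha : 0 < a) : ContDiff ℝ 2 (J2 a b) := by
  apply ContDiff.prodMk
  · apply ContDiff.sub
    · apply ContDiff.div
      · exact contDiff_const.mul contDiff_snd
      · exact (contDiff_snd.pow 2).add contDiff_const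
      · intro p; exact sq_add_ne ha p.2
    · exact contDiff_fst
  · exact contDiff_snd

lemma contDiff_T (ha : 0 < a) : ContDiff ℝ 2 (johnMap a b) :=
  (contDiff_J2 ha).comp (contDiff_J1 ha)

lemma contDiff_T_iter (ha : 0 < a) (k : ℕ) : ContDiff ℝ 2 ((johnMap a b)^[k]) := by
  induction k with
  | zero => exact contDiff_id
  | succ n ih => rw [Function.iterate_succ']; exact (contDiff_T ha).comp ih

lemma contDiff_Wf (ha : 0 < a) (hw : ContDiff ℝ 2 w) : ContDiff ℝ 2 (Wf a b N w) := by
  apply ContDiff.sum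
  intro k _
  exact (hw.comp (contDiff_T_iter ha k)).add
    ((hw.comp (contDiff_T_iter ha k)).comp (contDiff_J1 ha))

lemma continuous_Yp (ha : 0 < a) : Continuous (Yp a b) := by
  apply Continuous.div
  · exact (continuous_const.mul continuous_id).add
      (Real.continuous_sqrt.comp (by unfold Dq; fun_prop))
  · fun_prop
  · intro x; exact sq_add_ne ha x

lemma contDiffAt_Yp (ha : 0 < a) {x : ℝ} (hx : 0 < Dq a b x) : ContDiffAt ℝ 2 (Yp a b) x := by
  apply ContDiffAt.div
  · apply ContDiffAt.add
    · exact (contDiff_const.mul contDiff_id).contDiffAt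
    · have hD : ContDiff ℝ 2 (Dq a b) := by unfold Dq; fun_prop
      exact (Real.contDiffAt_sqrt hx.ne').comp x hD.contDiffAt
  · fun_prop
  · exact sq_add_ne ha x

lemma fB_trace (ha : 0 < a) {p : ℝ × ℝ} (hp : p ∈ EBcurve a b) :
    fB a b N w p.1 = Wf a b N w p := by
  obtain ⟨x, y⟩ := p
  have hp' : Fc a b (x, y) = 0 := hp
  have hD : 0 ≤ Dq a b x := Dq_nonneg ha hp'
  simp only [fB, if_pos hD]
  rcases y_eq_branch ha hp' with h | h
  · rw [h]
  · have hw1 := Wf_J1 (a := a) (b := b) (N := N) (w := w) (x, Yp a b x)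
    rw [J1_Yp ha] at hw1
    rw [h, ← hw1]

lemma hB_trace (ha : 0 < a) (hN : 1 ≤ N)
    (hper : ∀ p ∈ EBcurve a b, (johnMap a b)^[N] p = p)
    {p : ℝ × ℝ} (hp : p ∈ EBcurve a b) :
    hB a b N w p.2 = Wf a b N w p := by
  obtain ⟨x, y⟩ := p
  have hp' : Fc a b (x, y) = 0 := hp
  have hsw : Fc a b (y, x) = 0 := by rw [Fc_swap]; exact hp'
  have hD : 0 ≤ Dq a b y := Dq_nonneg ha hsw
  simp only [hB, if_pos hD]
  have hmem : (Yp a b y, y) ∈ EBcurve a b := by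
    show Fc a b (Yp a b y, y) = 0
    rw [Fc_swap]; exact Fc_Yp ha hD
  rcases y_eq_branch ha hsw with h | h
  · rw [h]
  · have hw2 := Wf_J2 (w := w) ha hN hper hmem
    rw [J2_Yp ha] at hw2
    rw [h, ← hw2]

lemma continuous_fB (ha : 0 < a) (hWc : Continuous (Wf a b N w))
    (hvan : ∀ x : ℝ, Dq a b x = 0 → Wf a b N w (x, Yp a b x) = 0) :
    Continuous (fB a b N w) := by
  have hDc : Continuous (Dq a b) := by unfold Dq; fun_prop
  have hG : Continuous (fun x => Wf a b N w (x, Yp a b x)) :=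
    hWc.comp (continuous_id.prodMk (continuous_Yp ha))
  rw [continuous_iff_continuousAt]
  intro x
  rcases lt_trichotomy (Dq a b x) 0 with h | h | h
  · apply ContinuousAt.congr (continuousAt_const (y := (0:ℝ)))
    have hlt : ∀ᶠ y in nhds x, Dq a b y < 0 :=
      Filter.Tendsto.eventually_lt_const h hDc.continuousAt
    filter_upwards [hlt] with y hy
    simp [fB, not_le.mpr hy]
  · have hval : fB a b N w x = 0 := by simp [fB, h.ge, hvan x h]
    have htend : Filter.Tendsto (fB a b N w) (nhds x) (nhds 0) := by
      apply squeeze_zero_norm (a := fun y => |Wf a b N w (y, Yp a b y)|)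
      · intro y
        rw [Real.norm_eq_abs]
        by_cases hy : 0 ≤ Dq a b y
        · simp only [fB, if_pos hy]; exact le_refl _
        · simp only [fB, if_neg hy, abs_zero]; positivity
      · have h2 := (hG.abs).continuousAt (x := x)
        rw [ContinuousAt, hvan x h, abs_zero] at h2
        exact h2
    unfold ContinuousAt
    rw [hval]
    exact htend
  · apply ContinuousAt.congr (hG.continuousAt (x := x))
    have hgt : ∀ᶠ y in nhds x, 0 < Dq a b y :=
      Filter.Tendsto.eventually_const_lt h hDc.continuousAt
    filter_upwards [hgt] with y hy
    simp [fB, hy.le]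

lemma contDiffAt_fB (ha : 0 < a) (hWsm : ContDiff ℝ 2 (Wf a b N w))
    {x : ℝ} (hx : 0 < Dq a b x) : ContDiffAt ℝ 2 (fB a b N w) x := by
  have hDc : Continuous (Dq a b) := by unfold Dq; fun_prop
  have hG : ContDiffAt ℝ 2 (fun x => Wf a b N w (x, Yp a b x)) x :=
    (hWsm.contDiffAt).comp x (contDiffAt_id.prodMk (contDiffAt_Yp ha hx))
  apply hG.congr_of_eventuallyEq
  have hgt : ∀ᶠ y in nhds x, 0 < Dq a b y :=
    Filter.Tendsto.eventually_const_lt hx hDc.continuousAt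
  filter_upwards [hgt] with y hy
  simp [fB, hy.le]

lemma continuous_hB (ha : 0 < a) (hWc : Continuous (Wf a b N w))
    (hvan : ∀ y : ℝ, Dq a b y = 0 → Wf a b N w (Yp a b y, y) = 0) :
    Continuous (hB a b N w) := by
  have hDc : Continuous (Dq a b) := by unfold Dq; fun_prop
  have hG : Continuous (fun y => Wf a b N w (Yp a b y, y)) :=
    hWc.comp ((continuous_Yp ha).prodMk continuous_id)
  rw [continuous_iff_continuousAt]
  intro x
  rcases lt_trichotomy (Dq a b x) 0 with h | h | h
  · apply ContinuousAt.congr (continuousAt_const (y := (0:ℝ)))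
    have hlt : ∀ᶠ y in nhds x, Dq a b y < 0 :=
      Filter.Tendsto.eventually_lt_const h hDc.continuousAt
    filter_upwards [hlt] with y hy
    simp [hB, not_le.mpr hy]
  · have hval : hB a b N w x = 0 := by simp [hB, h.ge, hvan x h]
    have htend : Filter.Tendsto (hB a b N w) (nhds x) (nhds 0) := by
      apply squeeze_zero_norm (a := fun y => |Wf a b N w (Yp a b y, y)|)
      · intro y
        rw [Real.norm_eq_abs]
        by_cases hy : 0 ≤ Dq a b y
        · simp only [hB, if_pos hy]; exact le_refl _
        · simp only [hB, if_neg hy, abs_zero]; positivity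
      · have h2 := (hG.abs).continuousAt (x := x)
        rw [ContinuousAt, hvan x h, abs_zero] at h2
        exact h2
    unfold ContinuousAt
    rw [hval]
    exact htend
  · apply ContinuousAt.congr (hG.continuousAt (x := x))
    have hgt : ∀ᶠ y in nhds x, 0 < Dq a b y :=
      Filter.Tendsto.eventually_const_lt h hDc.continuousAt
    filter_upwards [hgt] with y hy
    simp [hB, hy.le]

lemma contDiffAt_hB (ha : 0 < a) (hWsm : ContDiff ℝ 2 (Wf a b N w))
    {x : ℝ} (hx : 0 < Dq a b x) : ContDiffAt ℝ 2 (hB a b N w) x := by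
  have hDc : Continuous (Dq a b) := by unfold Dq; fun_prop
  have hG : ContDiffAt ℝ 2 (fun y => Wf a b N w (Yp a b y, y)) x :=
    (hWsm.contDiffAt).comp x ((contDiffAt_Yp ha hx).prodMk contDiffAt_id)
  apply hG.congr_of_eventuallyEq
  have hgt : ∀ᶠ y in nhds x, 0 < Dq a b y :=
    Filter.Tendsto.eventually_const_lt hx hDc.continuousAt
  filter_upwards [hgt] with y hy
  simp [hB, hy.le]

lemma rootsD_finite (ha : 0 < a) : {x : ℝ | Dq a b x = 0}.Finite := by
  have hpoly : {x : ℝ | Dq a b x = 0}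
      = {x : ℝ | (C (-a) * X ^ 4 + C (b ^ 2 - a ^ 2 - 1) * X ^ 2 + C (-a)).IsRoot x} := by
    ext x
    simp only [mem_setOf_eq, IsRoot.def, eval_add, eval_mul, eval_C, eval_pow, eval_X, Dq]
    constructor <;> intro h <;> nlinarith [h]
  rw [hpoly]
  apply Polynomial.finite_setOf_isRoot
  intro hzero
  have hc : (C (-a) * X ^ 4 + C (b ^ 2 - a ^ 2 - 1) * X ^ 2 + C (-a)).coeff 4 = -a := by
    rw [coeff_add, coeff_add, coeff_C_mul, coeff_C_mul, coeff_X_pow, coeff_X_pow, coeff_C]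
    norm_num
  rw [hzero] at hc
  simp at hc
  linarith

lemma J1_fixed_iff (ha : 0 < a) {q : ℝ × ℝ} (hq : Fc a b q = 0) (hfix : J1 a b q = q) :
    q.2 = -b * q.1 / (q.1 ^ 2 + a) ∧ Dq a b q.1 = 0 := by
  have hne := sq_add_ne ha q.1
  have h2 : -2 * b * q.1 / (q.1 ^ 2 + a) - q.2 = q.2 := congrArg Prod.snd hfix
  have hy : q.2 = -b * q.1 / (q.1 ^ 2 + a) := by field_simp at h2 ⊢; linarith
  refine ⟨hy, ?_⟩
  have hk := key_identity a b q.1 q.2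
  have hz : (q.1 ^ 2 + a) * q.2 + b * q.1 = 0 := by rw [hy]; field_simp; ring
  have hq2 : Fc a b (q.1, q.2) = 0 := hq
  rw [hz, hq2] at hk
  simpa using hk.symm

lemma J2_fixed_iff (ha : 0 < a) {q : ℝ × ℝ} (hq : Fc a b q = 0) (hfix : J2 a b q = q) :
    q.1 = -b * q.2 / (q.2 ^ 2 + a) ∧ Dq a b q.2 = 0 := by
  have hne := sq_add_ne ha q.2
  have h2 : -2 * b * q.2 / (q.2 ^ 2 + a) - q.1 = q.1 := congrArg Prod.fst hfix
  have hy : q.1 = -b * q.2 / (q.2 ^ 2 + a) := by field_simp at h2 ⊢; linarith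
  refine ⟨hy, ?_⟩
  have hk := key_identity a b q.2 q.1
  have hz : (q.2 ^ 2 + a) * q.1 + b * q.2 = 0 := by rw [hy]; field_simp; ring
  have hq2 : Fc a b (q.2, q.1) = 0 := by
    simp only [Fc] at hq ⊢; nlinarith [hq]
  rw [hz, hq2] at hk
  simpa using hk.symm

lemma folds_finite (ha : 0 < a) : (folds a b).Finite := by
  apply Set.Finite.union
  · apply Set.Finite.subset (((rootsD_finite (a := a) (b := b) ha).image
      (fun x => (x, -b * x / (x ^ 2 + a)))))
    rintro q ⟨hq, hfix⟩
    obtain ⟨hy, hD⟩ := J1_fixed_iff ha hq hfix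
    exact ⟨q.1, hD, by simp only []; rw [← hy]⟩
  · apply Set.Finite.subset (((rootsD_finite (a := a) (b := b) ha).image
      (fun y => (-b * y / (y ^ 2 + a), y))))
    rintro q ⟨hq, hfix⟩
    obtain ⟨hx, hD⟩ := J2_fixed_iff ha hq hfix
    exact ⟨q.2, hD, by simp only []; rw [← hx]⟩

lemma ray_hits_frontier {Ω : Set (ℝ × ℝ)} (hop : IsOpen Ω) (hbd : Bornology.IsBounded Ω)
    {z : ℝ × ℝ} (hz : z ∈ Ω) (v : ℝ × ℝ) (hv : v ≠ 0) :
    ∃ t : ℝ, 0 < t ∧ z + t • v ∈ frontier Ω := by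
  obtain ⟨R0, hR0⟩ := hbd.subset_ball 0
  set R := |R0| + 1 with hRdef
  have hR : Ω ⊆ ball 0 R := hR0.trans (Metric.ball_subset_ball
    (by simp [hRdef]; linarith [le_abs_self R0]))
  have hRpos : 0 < R := by positivity
  have hvn : 0 < ‖v‖ := norm_pos_iff.mpr hv
  set e : ℝ → ℝ × ℝ := fun t => z + t • v with he
  have hec : Continuous e := by fun_prop
  set A : Set ℝ := {t | 0 ≤ t ∧ e t ∉ Ω} with hA
  have hclosed : IsClosed A := by
    have : A = Set.Ici 0 ∩ e ⁻¹' Ωᶜ := by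
      ext t; simp [hA, Set.mem_Ici, Set.mem_preimage, Set.mem_compl_iff]
    rw [this]
    exact isClosed_Ici.inter (hop.isClosed_compl.preimage hec)
  have hAne : A.Nonempty := by
    refine ⟨(R + ‖z‖ + 1) / ‖v‖, by positivity, fun hmem => ?_⟩
    have h1 : dist (e ((R + ‖z‖ + 1) / ‖v‖)) 0 < R := hR hmem
    have h2 : ‖e ((R + ‖z‖ + 1) / ‖v‖)‖ < R := by rwa [dist_zero_right] at h1
    have h3 : ‖((R + ‖z‖ + 1) / ‖v‖) • v‖ = R + ‖z‖ + 1 := by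
      rw [norm_smul, Real.norm_eq_abs, abs_div, abs_norm,
        abs_of_nonneg (by positivity : (0:ℝ) ≤ R + ‖z‖ + 1)]
      field_simp
    have h4 : ‖((R + ‖z‖ + 1) / ‖v‖) • v‖ ≤ ‖e ((R + ‖z‖ + 1) / ‖v‖)‖ + ‖z‖ := by
      have h5 : ((R + ‖z‖ + 1) / ‖v‖) • v = e ((R + ‖z‖ + 1) / ‖v‖) - z := by
        simp [he]
      rw [h5]
      exact norm_sub_le _ _
    linarith
  have hbdd : BddBelow A := ⟨0, fun t ht => ht.1⟩
  set τ := sInf A with hτ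
  have hτA : τ ∈ A := hclosed.csInf_mem hAne hbdd
  have hτpos : 0 < τ := by
    rcases lt_or_eq_of_le hτA.1 with h | h
    · exact h
    · exfalso; apply hτA.2; rw [← h]; simpa [he] using hz
  refine ⟨τ, hτpos, ?_, ?_⟩
  · rw [Metric.mem_closure_iff]
    intro ε hε
    set m := min (ε / (2 * ‖v‖)) (τ / 2) with hm
    have hmpos : 0 < m := by positivity
    have hmτ : 0 ≤ τ - m ∧ τ - m < τ := by
      constructor
      · have : m ≤ τ / 2 := min_le_right _ _
        linarith
      · linarith
    have hmem : e (τ - m) ∈ Ω := by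
      by_contra hnot
      have h6 : τ - m ∈ A := ⟨hmτ.1, hnot⟩
      have := csInf_le hbdd h6
      rw [← hτ] at this
      linarith [hmτ.2]
    refine ⟨e (τ - m), hmem, ?_⟩
    have h7 : dist (e τ) (e (τ - m)) = m * ‖v‖ := by
      rw [dist_eq_norm]
      have h8 : e τ - e (τ - m) = m • v := by
        simp [he, sub_smul]
      rw [h8, norm_smul, Real.norm_eq_abs, abs_of_pos hmpos]
    rw [h7]
    have hm2 : m ≤ ε / (2 * ‖v‖) := min_le_left _ _
    calc m * ‖v‖ ≤ (ε / (2 * ‖v‖)) * ‖v‖ := by nlinarith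
      _ = ε / 2 := by field_simp
      _ < ε := by linarith
  · rw [hop.interior_eq]
    exact hτA.2

lemma two_roots (ha : 0 < a) {x α β : ℝ} (h1 : Fc a b (x, α) = 0) (h2 : Fc a b (x, β) = 0)
    (hne : α ≠ β) : 0 < Dq a b x := by
  rcases (Dq_nonneg ha h1).lt_or_eq with h | h
  · exact h
  · exfalso
    apply hne
    have hYm := Ym_eq_Yp_of_D0 (a := a) (b := b) h.symm
    rcases y_eq_branch ha h1 with ha1 | ha1 <;> rcases y_eq_branch ha h2 with hb1 | hb1 <;>
      rw [ha1, hb1] <;> rw [hYm]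

lemma Dq_pos_of_mem {Ω : Set (ℝ × ℝ)} (ha : 0 < a) (hop : IsOpen Ω)
    (hbd : Bornology.IsBounded Ω) (hfr : frontier Ω = EBcurve a b)
    {z : ℝ × ℝ} (hz : z ∈ Ω) : 0 < Dq a b z.1 ∧ 0 < Dq a b z.2 := by
  have hup := ray_hits_frontier hop hbd hz ((0:ℝ), (1:ℝ)) (by simp [Prod.ext_iff])
  have hdn := ray_hits_frontier hop hbd hz ((0:ℝ), (-1:ℝ)) (by simp [Prod.ext_iff])
  have hrt := ray_hits_frontier hop hbd hz ((1:ℝ), (0:ℝ)) (by simp [Prod.ext_iff])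
  have hlf := ray_hits_frontier hop hbd hz ((-1:ℝ), (0:ℝ)) (by simp [Prod.ext_iff])
  obtain ⟨t1, ht1, hm1⟩ := hup
  obtain ⟨t2, ht2, hm2⟩ := hdn
  obtain ⟨t3, ht3, hm3⟩ := hrt
  obtain ⟨t4, ht4, hm4⟩ := hlf
  rw [hfr] at hm1 hm2 hm3 hm4
  have e1 : z + t1 • ((0:ℝ), (1:ℝ)) = (z.1, z.2 + t1) := by
    simp [Prod.ext_iff, Prod.smul_mk, smul_eq_mul]
  have e2 : z + t2 • ((0:ℝ), (-1:ℝ)) = (z.1, z.2 - t2) := by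
    simp [Prod.ext_iff, Prod.smul_mk, smul_eq_mul]; ring
  have e3 : z + t3 • ((1:ℝ), (0:ℝ)) = (z.1 + t3, z.2) := by
    simp [Prod.ext_iff, Prod.smul_mk, smul_eq_mul]
  have e4 : z + t4 • ((-1:ℝ), (0:ℝ)) = (z.1 - t4, z.2) := by
    simp [Prod.ext_iff, Prod.smul_mk, smul_eq_mul]; ring
  rw [e1] at hm1; rw [e2] at hm2; rw [e3] at hm3; rw [e4] at hm4
  constructor
  · exact two_roots ha hm1 hm2 (by intro h; nlinarith [congrArg id h])
  · have h3 : Fc a b (z.2, z.1 + t3) = 0 := by rw [Fc_swap]; exact hm3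
    have h4 : Fc a b (z.2, z.1 - t4) = 0 := by rw [Fc_swap]; exact hm4
    exact two_roots ha h3 h4 (by intro h; nlinarith [congrArg id h])

end EBaux

open Set Metric Finset Polynomial in
theorem dirichlet_infinite_solutions (a b : ℝ) (ha : 0 < a)
    (hb : a + 1 < |b|) (Ω : Set (ℝ × ℝ)) (hne : Ω.Nonempty) (hop : IsOpen Ω)
    (hbd : Bornology.IsBounded Ω) (hfr : frontier Ω = EBcurve a b)
    (hper : ∃ N : ℕ, 1 ≤ N ∧ ∀ p ∈ EBcurve a b, (johnMap a b)^[N] p = p) :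
    ∃ Φ : ℕ → ℝ × ℝ → ℝ, (∀ n : ℕ, IsDirichletSolution a b Ω (Φ n)) ∧
      LinearIndependent ℝ (fun n : ℕ => (closure Ω).restrict (Φ n)) := by
  classical
  obtain ⟨N, hN1, hperN⟩ := hper
  -- the bad set : orbit images of fold points
  have hfoldfin : (folds a b).Finite := folds_finite ha
  set BAD : Set (ℝ × ℝ) := ⋃ k ∈ Set.Iio N,
      ((johnMap a b)^[k] '' folds a b ∪ ((johnMap a b)^[k] ∘ J1 a b) '' folds a b) with hBADdef
  have hBADfin : BAD.Finite :=
    Set.Finite.biUnion (Set.finite_Iio N)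
      (fun k _ => (hfoldfin.image _).union (hfoldfin.image _))
  -- a base point of Ω and a horizontal interval inside Ω
  obtain ⟨z0, hz0⟩ := hne
  obtain ⟨ε0, hε0pos, hball0⟩ := Metric.isOpen_iff.mp hop z0 hz0
  have hIoo : ∀ x ∈ Set.Ioo (z0.1 - ε0) (z0.1 + ε0), (x, z0.2) ∈ Ω := by
    intro x hx
    apply hball0
    rw [Metric.mem_ball, Prod.dist_eq]
    simp only [dist_self]
    rw [Real.dist_eq]
    have : |x - z0.1| < ε0 := abs_lt.mpr ⟨by linarith [hx.1], by linarith [hx.2]⟩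
    exact max_lt this hε0pos
  -- infinitely many curve points whose abscissa lies over Ω
  set S : Set (ℝ × ℝ) :=
      {p : ℝ × ℝ | p ∈ EBcurve a b ∧ p.1 ∈ Set.Ioo (z0.1 - ε0) (z0.1 + ε0)} with hSdef
  have hSinf : S.Infinite := by
    intro hSfin
    have himg : (Prod.fst '' S).Finite := hSfin.image _
    have hsub : Set.Ioo (z0.1 - ε0) (z0.1 + ε0) ⊆ Prod.fst '' S := by
      intro x hx
      obtain ⟨t, htpos, htmem⟩ :=
        ray_hits_frontier hop hbd (hIoo x hx) ((0:ℝ), (1:ℝ)) (by simp [Prod.ext_iff])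
      rw [hfr] at htmem
      have he : (x, z0.2) + t • ((0:ℝ), (1:ℝ)) = (x, z0.2 + t) := by
        simp [Prod.ext_iff, Prod.smul_mk, smul_eq_mul]
      rw [he] at htmem
      exact ⟨(x, z0.2 + t), ⟨htmem, hx⟩, rfl⟩
    have : (Set.Ioo (z0.1 - ε0) (z0.1 + ε0)).Finite := himg.subset hsub
    exact (Set.infinite_coe_iff.mp (Set.Ioo.infinite (by linarith))) this
  -- choose the good point p₀
  obtain ⟨p₀, hp₀S, hp₀BAD⟩ := (hSinf.diff hBADfin).nonempty
  have hp₀C : p₀ ∈ EBcurve a b := hp₀S.1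
  have hp₀Fc : Fc a b p₀ = 0 := hp₀C
  set x₀ := p₀.1 with hx₀def
  -- the point of Ω right below/above p₀'s vertical line
  have hzΩ : ((x₀, z0.2) : ℝ × ℝ) ∈ Ω := hIoo x₀ hp₀S.2
  obtain ⟨ε1, hε1pos, hball1⟩ := Metric.isOpen_iff.mp hop _ hzΩ
  have hDx₀ : 0 < Dq a b x₀ := (Dq_pos_of_mem ha hop hbd hfr hzΩ).1
  -- orbit of p₀ and the radius r
  set ORB : Set (ℝ × ℝ) := (fun k => (johnMap a b)^[k] p₀) '' Set.Iio N ∪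
      (fun k => (johnMap a b)^[k] (J1 a b p₀)) '' Set.Iio N with hORBdef
  have hORBfin : ORB.Finite :=
    ((Set.finite_Iio N).image _).union ((Set.finite_Iio N).image _)
  set Z : Set (ℝ × ℝ) := BAD ∪ ORB with hZdef
  have hZfin : Z.Finite := hBADfin.union hORBfin
  have hrex : ∃ r : ℝ, 0 < r ∧ ∀ q ∈ Z, q ≠ p₀ → r ≤ dist p₀ q := by
    rcases Set.eq_empty_or_nonempty (Z \ {p₀}) with hem | hnem
    · exact ⟨1, one_pos, fun q hq hne' => absurd (Set.eq_empty_iff_forall_notMem.mp hem q)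
        (by simp [hq, hne'])⟩
    · obtain ⟨q0, hq0mem, hq0min⟩ :=
        Set.exists_min_image (Z \ {p₀}) (fun q => dist p₀ q) (hZfin.subset Set.diff_subset) hnem
      refine ⟨dist p₀ q0, ?_, fun q hq hne' => hq0min q ⟨hq, hne'⟩⟩
      rw [dist_pos]
      exact fun h => hq0mem.2 (by simp [← h])
  obtain ⟨r, hrpos, hrmin⟩ := hrex
  -- the bump and weight
  set χ : ContDiffBump p₀ := ⟨r / 2, r, by linarith, by linarith⟩ with hχdef
  set w : ℝ × ℝ → ℝ := fun p => (χ p) * (p.1 - x₀) ^ 2 with hwdef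
  have hw_sm : ContDiff ℝ 2 w :=
    (χ.contDiff).mul ((contDiff_fst.sub contDiff_const).pow 2)
  have hw_nonneg : ∀ p, 0 ≤ w p := fun p => mul_nonneg χ.nonneg (sq_nonneg _)
  have hw_zero : ∀ p : ℝ × ℝ, r ≤ dist p₀ p → w p = 0 := by
    intro p hd
    have : (χ : (ℝ × ℝ) → ℝ) p = 0 := χ.zero_of_le_dist (by rwa [dist_comm])
    simp [hwdef, this]
  have hWsm : ContDiff ℝ 2 (Wf a b N w) := contDiff_Wf ha hw_sm
  have hWc : Continuous (Wf a b N w) := hWsm.continuous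
  -- W vanishes at fold points
  have hWvanfold : ∀ q ∈ folds a b, Wf a b N w q = 0 := by
    intro q hq
    apply Finset.sum_eq_zero
    intro k hk
    have hkN : k ∈ Set.Iio N := by simpa using Finset.mem_range.mp hk
    have h1 : (johnMap a b)^[k] q ∈ BAD := by
      apply Set.mem_biUnion hkN
      exact Or.inl ⟨q, hq, rfl⟩
    have h2 : (johnMap a b)^[k] (J1 a b q) ∈ BAD := by
      apply Set.mem_biUnion hkN
      exact Or.inr ⟨q, hq, rfl⟩
    have hne1 : (johnMap a b)^[k] q ≠ p₀ := fun h => hp₀BAD (h ▸ h1)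
    have hne2 : (johnMap a b)^[k] (J1 a b q) ≠ p₀ := fun h => hp₀BAD (h ▸ h2)
    rw [hw_zero _ (hrmin _ (Set.mem_union_left _ h1) hne1),
      hw_zero _ (hrmin _ (Set.mem_union_left _ h2) hne2), add_zero]
  have hvan_x : ∀ x : ℝ, Dq a b x = 0 → Wf a b N w (x, Yp a b x) = 0 := by
    intro x hx
    apply hWvanfold
    left
    refine ⟨Fc_Yp ha hx.ge, ?_⟩
    rw [J1_Yp ha, Ym_eq_Yp_of_D0 hx]
  have hvan_y : ∀ y : ℝ, Dq a b y = 0 → Wf a b N w (Yp a b y, y) = 0 := by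
    intro y hy
    apply hWvanfold
    right
    refine ⟨by rw [Fc_swap]; exact Fc_Yp ha hy.ge, ?_⟩
    rw [J2_Yp ha, Ym_eq_Yp_of_D0 hy]
  -- the one-dimensional data
  set f : ℝ → ℝ := fB a b N w with hfdef
  set h : ℝ → ℝ := hB a b N w with hhdef
  have hfc : Continuous f := continuous_fB ha hWc hvan_x
  have hhc : Continuous h := continuous_hB ha hWc hvan_y
  have hftrace : ∀ p ∈ EBcurve a b, f p.1 = Wf a b N w p := fun p hp => fB_trace ha hp
  have hhtrace : ∀ p ∈ EBcurve a b, h p.2 = Wf a b N w p :=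
    fun p hp => hB_trace ha hN1 hperN hp
  -- the solution family
  set Φ : ℕ → ℝ × ℝ → ℝ := fun n p => f p.1 ^ (n + 1) - h p.2 ^ (n + 1) with hΦdef
  have hsol : ∀ n : ℕ, IsDirichletSolution a b Ω (Φ n) := by
    intro n
    refine ⟨?_, ?_, ?_, ?_⟩
    · exact (((hfc.comp continuous_fst).pow _).sub
        ((hhc.comp continuous_snd).pow _)).continuousOn
    · intro p hp
      have hD := Dq_pos_of_mem ha hop hbd hfr hp
      apply ContDiffAt.contDiffWithinAt
      exact (((contDiffAt_fB ha hWsm hD.1).comp p contDiff_fst.contDiffAt).pow _).sub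
        (((contDiffAt_hB ha hWsm hD.2).comp p contDiff_snd.contDiffAt).pow _)
    · intro p hp
      have heq : (fun x : ℝ => deriv (fun y : ℝ => Φ n (x, y)) p.2)
          = fun _ : ℝ => -deriv (fun y : ℝ => h y ^ (n + 1)) p.2 := by
        funext x
        simp only [hΦdef]
        exact deriv_const_sub _
      rw [heq, deriv_const]
    · intro p hp
      have h1 : f p.1 = h p.2 := by rw [hftrace p hp, hhtrace p hp]
      simp [hΦdef, h1]
  -- which branch does p₀ sit on?
  have hp₀pair : ((p₀.1, p₀.2) : ℝ × ℝ) = p₀ := rfl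
  have hbranch : ((x₀, Yp a b x₀) : ℝ × ℝ) = p₀ ∨ ((x₀, Yp a b x₀) : ℝ × ℝ) = J1 a b p₀ := by
    rcases y_eq_branch ha (show Fc a b (p₀.1, p₀.2) = 0 from hp₀Fc) with h1 | h1
    · left; rw [← hp₀pair]; exact Prod.ext rfl h1.symm
    · right
      have h2 : J1 a b p₀ = J1 a b ((x₀, Ym a b x₀) : ℝ × ℝ) := by
        rw [← hp₀pair]; congr 1; exact Prod.ext rfl h1
      rw [h2, J1_Ym ha]
  -- value of f at x₀
  have hwp₀ : w p₀ = 0 := by simp [hwdef, hx₀def]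
  have hWp₀ : Wf a b N w p₀ = 0 := by
    apply Finset.sum_eq_zero
    intro k hk
    have hkN : k ∈ Set.Iio N := by simpa using Finset.mem_range.mp hk
    have t1 : w ((johnMap a b)^[k] p₀) = 0 := by
      by_cases hq : (johnMap a b)^[k] p₀ = p₀
      · rw [hq, hwp₀]
      · exact hw_zero _ (hrmin _ (Set.mem_union_right _ (Or.inl ⟨k, hkN, rfl⟩)) hq)
    have t2 : w ((johnMap a b)^[k] (J1 a b p₀)) = 0 := by
      by_cases hq : (johnMap a b)^[k] (J1 a b p₀) = p₀
      · rw [hq, hwp₀]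
      · exact hw_zero _ (hrmin _ (Set.mem_union_right _ (Or.inr ⟨k, hkN, rfl⟩)) hq)
    rw [t1, t2, add_zero]
  have hfx₀ : f x₀ = 0 := by
    have h1 : f x₀ = Wf a b N w ((x₀, Yp a b x₀) : ℝ × ℝ) := by
      simp [hfdef, fB, hDx₀.le]
    rw [h1]
    rcases hbranch with hbr | hbr
    · rw [hbr]; exact hWp₀
    · rw [hbr, Wf_J1]; exact hWp₀
  -- quadratic lower bound for f near x₀
  have hDcont : Continuous (Dq a b) := by unfold Dq; fun_prop
  have hDev : ∀ᶠ x in nhds x₀, 0 < Dq a b x :=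
    Filter.Tendsto.eventually_const_lt hDx₀ hDcont.continuousAt
  have hcontbr : Continuous (fun x => ((x, Yp a b x) : ℝ × ℝ)) :=
    continuous_id.prodMk (continuous_Yp ha)
  have hlow : ∀ᶠ x in nhds x₀, (x - x₀) ^ 2 ≤ f x := by
    have h0mem : (0 : ℕ) ∈ Finset.range N := Finset.mem_range.mpr hN1
    rcases hbranch with hbr | hbr
    · have hev : ∀ᶠ x in nhds x₀, ((x, Yp a b x) : ℝ × ℝ) ∈ closedBall p₀ (r / 2) := by
        have htend : Filter.Tendsto (fun x => ((x, Yp a b x) : ℝ × ℝ)) (nhds x₀) (nhds p₀) := by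
          have := hcontbr.continuousAt (x := x₀)
          rwa [ContinuousAt, hbr] at this
        exact htend (Metric.closedBall_mem_nhds p₀ (by linarith : (0:ℝ) < r / 2))
      filter_upwards [hDev, hev] with x hx1 hx2
      have hfx : f x = Wf a b N w ((x, Yp a b x) : ℝ × ℝ) := by simp [hfdef, fB, hx1.le]
      rw [hfx]
      have hχ1 : (χ : ℝ × ℝ → ℝ) ((x, Yp a b x) : ℝ × ℝ) = 1 := χ.one_of_mem_closedBall hx2
      have hterm : (x - x₀) ^ 2 ≤ w ((johnMap a b)^[0] ((x, Yp a b x) : ℝ × ℝ))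
          + w ((johnMap a b)^[0] (J1 a b ((x, Yp a b x) : ℝ × ℝ))) := by
        simp only [Function.iterate_zero_apply]
        have hwx : w ((x, Yp a b x) : ℝ × ℝ) = (x - x₀) ^ 2 := by simp [hwdef, hχ1]
        have := hw_nonneg (J1 a b ((x, Yp a b x) : ℝ × ℝ))
        linarith
      exact hterm.trans (Finset.single_le_sum
        (f := fun k => w ((johnMap a b)^[k] ((x, Yp a b x) : ℝ × ℝ))
          + w ((johnMap a b)^[k] (J1 a b ((x, Yp a b x) : ℝ × ℝ))))
        (fun k _ => add_nonneg (hw_nonneg _) (hw_nonneg _)) h0mem)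
    · have hev : ∀ᶠ x in nhds x₀,
          J1 a b ((x, Yp a b x) : ℝ × ℝ) ∈ closedBall p₀ (r / 2) := by
        have htend : Filter.Tendsto (fun x => J1 a b ((x, Yp a b x) : ℝ × ℝ))
            (nhds x₀) (nhds p₀) := by
          have hc2 := ((contDiff_J1 (b := b) ha).continuous.comp hcontbr).continuousAt (x := x₀)
          rw [ContinuousAt] at hc2
          have himg : J1 a b ((x₀, Yp a b x₀) : ℝ × ℝ) = p₀ := by
            rw [hbr, J1_invol]
          rwa [Function.comp, himg] at hc2
        exact htend (Metric.closedBall_mem_nhds p₀ (by linarith : (0:ℝ) < r / 2))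
      filter_upwards [hDev, hev] with x hx1 hx2
      have hfx : f x = Wf a b N w ((x, Yp a b x) : ℝ × ℝ) := by simp [hfdef, fB, hx1.le]
      rw [hfx]
      have hχ1 : (χ : ℝ × ℝ → ℝ) (J1 a b ((x, Yp a b x) : ℝ × ℝ)) = 1 :=
        χ.one_of_mem_closedBall hx2
      have hterm : (x - x₀) ^ 2 ≤ w ((johnMap a b)^[0] ((x, Yp a b x) : ℝ × ℝ))
          + w ((johnMap a b)^[0] (J1 a b ((x, Yp a b x) : ℝ × ℝ))) := by
        simp only [Function.iterate_zero_apply]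
        have hwx : w (J1 a b ((x, Yp a b x) : ℝ × ℝ)) = (x - x₀) ^ 2 := by
          have hfst : (J1 a b ((x, Yp a b x) : ℝ × ℝ)).1 = x := rfl
          simp only [hwdef]
          rw [hχ1, hfst, one_mul]
        have := hw_nonneg ((x, Yp a b x) : ℝ × ℝ)
        linarith
      exact hterm.trans (Finset.single_le_sum
        (f := fun k => w ((johnMap a b)^[k] ((x, Yp a b x) : ℝ × ℝ))
          + w ((johnMap a b)^[k] (J1 a b ((x, Yp a b x) : ℝ × ℝ))))
        (fun k _ => add_nonneg (hw_nonneg _) (hw_nonneg _)) h0mem)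
  obtain ⟨δ, hδpos, hδ⟩ := Metric.eventually_nhds_iff.mp hlow
  set δ3 : ℝ := min δ (ε1 / 2) with hδ3def
  have hδ3pos : 0 < δ3 := lt_min hδpos (by linarith)
  have hδ3lt : ∀ x : ℝ, |x - x₀| < δ3 → (x - x₀) ^ 2 ≤ f x := by
    intro x hx
    apply hδ
    rw [Real.dist_eq]
    exact lt_of_lt_of_le hx (min_le_left _ _)
  have hmemΩ : ∀ x : ℝ, |x - x₀| < δ3 → ((x, z0.2) : ℝ × ℝ) ∈ Ω := by
    intro x hx
    apply hball1
    rw [Metric.mem_ball, Prod.dist_eq]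
    simp only [dist_self]
    rw [Real.dist_eq]
    have h2 : |x - x₀| < ε1 := by
      have := min_le_right δ (ε1 / 2)
      calc |x - x₀| < δ3 := hx
        _ ≤ ε1 / 2 := min_le_right _ _
        _ < ε1 := by linarith
    exact max_lt h2 hε1pos
  -- linear independence
  refine ⟨Φ, hsol, ?_⟩
  rw [linearIndependent_iff']
  intro s g hsum i hi
  set P : Polynomial ℝ := ∑ j ∈ s, Polynomial.C (g j) * Polynomial.X ^ (j + 1) with hPdef
  have hptwise : ∀ x : ℝ, |x - x₀| < δ3 →
      ∑ j ∈ s, g j * (f x ^ (j + 1) - h z0.2 ^ (j + 1)) = 0 := by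
    intro x hx
    have hcl : ((x, z0.2) : ℝ × ℝ) ∈ closure Ω := subset_closure (hmemΩ x hx)
    have hev := congrFun hsum ⟨((x, z0.2) : ℝ × ℝ), hcl⟩
    simpa [Finset.sum_apply, Pi.smul_apply, Set.restrict_apply, Set.restrict, hΦdef, smul_eq_mul] using hev
  have hPeq : ∀ x : ℝ, |x - x₀| < δ3 → P.eval (f x) = P.eval (h z0.2) := by
    intro x hx
    have h1 := hptwise x hx
    have h2 : ∑ j ∈ s, g j * (f x ^ (j + 1) - h z0.2 ^ (j + 1))
        = P.eval (f x) - P.eval (h z0.2) := by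
      rw [hPdef]
      rw [Polynomial.eval_finset_sum, Polynomial.eval_finset_sum]
      rw [← Finset.sum_sub_distrib]
      apply Finset.sum_congr rfl
      intro j hj
      simp [mul_sub]
    rw [h2] at h1
    linarith
  set Q : Polynomial ℝ := P - Polynomial.C (P.eval (h z0.2)) with hQdef
  have hfx1 : (δ3 / 2) ^ 2 ≤ f (x₀ + δ3 / 2) := by
    have h9 := hδ3lt (x₀ + δ3 / 2) (by
      rw [(show x₀ + δ3 / 2 - x₀ = δ3 / 2 by ring), abs_of_pos (by linarith)]
      linarith)
    calc (δ3 / 2) ^ 2 = (x₀ + δ3 / 2 - x₀) ^ 2 := by ring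
      _ ≤ f (x₀ + δ3 / 2) := h9
  have hQroots : {v : ℝ | Q.IsRoot v}.Infinite := by
    have hIccsub : Set.Icc (0 : ℝ) ((δ3 / 2) ^ 2) ⊆ f '' Set.Icc x₀ (x₀ + δ3 / 2) := by
      intro v hv
      have h1 : Set.Icc (f x₀) (f (x₀ + δ3 / 2)) ⊆ f '' Set.Icc x₀ (x₀ + δ3 / 2) :=
        intermediate_value_Icc (by linarith) hfc.continuousOn
      apply h1
      rw [hfx₀]
      exact ⟨hv.1, hv.2.trans hfx1⟩
    have hinf1 : (Set.Icc (0 : ℝ) ((δ3 / 2) ^ 2)).Infinite :=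
      Set.infinite_coe_iff.mp (Set.Icc.infinite (by positivity))
    have hinf2 : (f '' Set.Icc x₀ (x₀ + δ3 / 2)).Infinite := hinf1.mono hIccsub
    apply hinf2.mono
    rintro v ⟨x, hxmem, rfl⟩
    have hxlt : |x - x₀| < δ3 := by
      rw [abs_lt]
      constructor
      · linarith [hxmem.1]
      · linarith [hxmem.2]
    show Q.IsRoot (f x)
    rw [Polynomial.IsRoot.def, hQdef, Polynomial.eval_sub, Polynomial.eval_C,
      hPeq x hxlt, sub_self]
  have hQ0 : Q = 0 := Polynomial.eq_zero_of_infinite_isRoot Q hQroots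
  have hcoeff : Q.coeff (i + 1) = g i := by
    rw [hQdef, Polynomial.coeff_sub, Polynomial.coeff_C, if_neg (Nat.succ_ne_zero i), sub_zero]
    rw [hPdef, Polynomial.finset_sum_coeff]
    have hterm : ∀ j ∈ s, (Polynomial.C (g j) * Polynomial.X ^ (j + 1)).coeff (i + 1)
        = if j = i then g j else 0 := by
      intro j hj
      rw [Polynomial.coeff_C_mul, Polynomial.coeff_X_pow]
      by_cases hji : j = i
      · simp [hji]
      · have : ¬ (i + 1 = j + 1) := by omega
        simp [hji, this, Ne.symm hji]
    rw [Finset.sum_congr rfl hterm, Finset.sum_ite_eq' s i (fun j => g j), if_pos hi]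
  rw [hQ0] at hcoeff
  simpa using hcoeff.symm
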